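/- Let n₁, n₂ ≥ 1, let τ₁ and τ₂ be faithful probability Radon measures on [0,1], and set m = lcm(n₁, n₂). Then there exist a faithful diffuse probability Radon measure σ on [0,1] and injective unital *-homomorphisms φᵢ : A_{nᵢ} → A_m (i = 1, 2) such that ∫ tr(φᵢ(f)(t)) dσ(t) = ∫ tr(f(t)) dτᵢ(t) for all f ∈ A_{nᵢ}. -/

import Mathlib

open MeasureTheory
open scoped ENNReal

noncomputable section

/-- The unit interval `[0,1]` as a type. -/
abbrev 𝕀 : Type := unitInterval

/-- A measure on `[0,1]` is *faithful* if it assigns positive measure to every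
nonempty (relatively) open subset. -/
def Faithful (μ : Measure 𝕀) : Prop :=
  ∀ U : Set 𝕀, IsOpen U → U.Nonempty → 0 < μ U

/-- A measure on `[0,1]` is *diffuse* (atomless) if every singleton has measure zero. -/
def Diffuse (μ : Measure 𝕀) : Prop :=
  ∀ t : 𝕀, μ {t} = 0

open scoped Matrix.Norms.L2Operator ComplexOrder

/-- `n × n` complex matrices. -/
abbrev Mat (n : ℕ) : Type := Matrix (Fin n) (Fin n) ℂ

/-- The C*-algebra `𝔸 n = C([0,1], Mₙ(ℂ))` of continuous matrix-valued functions. -/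
abbrev 𝔸 (n : ℕ) : Type := C(𝕀, Mat n)

/-- The tracial state on `𝔸 n` induced by the measure `μ` on `[0,1]`:
`f ↦ ∫ tr(f t) dμ(t)`, where `tr` is the normalized trace on `Mₙ(ℂ)`. -/
def trInt (n : ℕ) (μ : Measure 𝕀) (f : 𝔸 n) : ℂ :=
  ∫ t, (f t).trace / (n : ℂ) ∂μ

namespace Stmt4

open Set

lemma image_meas : ∀ s : Set 𝕀, MeasurableSet s → MeasurableSet (Subtype.val '' s) :=
  fun s hs => (MeasurableEmbedding.subtype_coe measurableSet_Icc).measurableSet_image.2 hs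

lemma volume_coe_le (c : ℝ) (h0 : 0 ≤ c) (h1 : c ≤ 1) :
    volume {u : 𝕀 | (u : ℝ) ≤ c} = ENNReal.ofReal c := by
  rw [Measure.Subtype.volume_def,
    Measure.comap_apply _ Subtype.val_injective image_meas _
      (measurableSet_le (by fun_prop) measurable_const)]
  have : (Subtype.val '' {u : 𝕀 | (u : ℝ) ≤ c}) = Icc 0 c := by
    ext x
    simp only [mem_image, mem_Icc, Subtype.exists, exists_and_right, exists_eq_right]
    constructor
    · rintro ⟨⟨hx1, _⟩, hx⟩; exact ⟨hx1, hx⟩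
    · rintro ⟨hx1, hx⟩; exact ⟨⟨hx1, hx.trans h1⟩, hx⟩
  rw [this, Real.volume_Icc]; simp [h0]

lemma diffuse_volume : Diffuse (volume : Measure 𝕀) := by
  intro t
  rw [Measure.Subtype.volume_def,
    Measure.comap_apply _ Subtype.val_injective image_meas _ (measurableSet_singleton t),
    Set.image_singleton]
  exact Real.volume_singleton

lemma faithful_volume : Faithful (volume : Measure 𝕀) := by
  rintro U hU ⟨x, hx⟩
  obtain ⟨ε, hε, hball⟩ := Metric.isOpen_iff.1 hU x hx
  set a : ℝ := max 0 ((x : ℝ) - ε / 2) with ha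
  set b : ℝ := min 1 ((x : ℝ) + ε / 2) with hb
  have hx0 : (0 : ℝ) ≤ x := x.2.1
  have hx1 : (x : ℝ) ≤ 1 := x.2.2
  have hab : a < b := by
    apply max_lt
    · exact lt_min zero_lt_one (by linarith)
    · exact lt_min (by linarith) (by linarith)
  have hsub : {u : 𝕀 | (u : ℝ) ∈ Ioo a b} ⊆ U := by
    intro u hu
    apply hball
    rw [Metric.mem_ball, Subtype.dist_eq, Real.dist_eq, abs_sub_lt_iff]
    have h1 : a < (u : ℝ) := hu.1
    have h2 : (u : ℝ) < b := hu.2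
    have h3 : (u : ℝ) < (x : ℝ) + ε / 2 := lt_of_lt_of_le h2 (min_le_right _ _)
    have h4 : (x : ℝ) - ε / 2 < u := lt_of_le_of_lt (le_max_right _ _) h1
    constructor <;> linarith
  refine lt_of_lt_of_le ?_ (measure_mono hsub)
  have hmeas : MeasurableSet {u : 𝕀 | (u : ℝ) ∈ Ioo a b} :=
    measurable_subtype_coe measurableSet_Ioo
  rw [Measure.Subtype.volume_def,
    Measure.comap_apply _ Subtype.val_injective image_meas _ hmeas]
  have himg : Subtype.val '' {u : 𝕀 | (u : ℝ) ∈ Ioo a b} = Ioo a b := by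
    have : {u : 𝕀 | (u : ℝ) ∈ Ioo a b} = (Subtype.val : 𝕀 → ℝ) ⁻¹' Ioo a b := rfl
    rw [this, Subtype.image_preimage_coe]
    apply inter_eq_self_of_subset_right
    intro r hr
    exact ⟨le_of_lt (lt_of_le_of_lt (le_max_left _ _) hr.1),
      le_of_lt (lt_of_lt_of_le hr.2 (min_le_left _ _))⟩
  rw [himg, Real.volume_Ioo]
  exact ENNReal.ofReal_pos.2 (by linarith)

/-- Existence of the (continuous, surjective) quantile function of a faithful
probability measure on `[0,1]`, pushing Lebesgue measure to it. -/
lemma exists_quantile (τ : Measure 𝕀) [IsProbabilityMeasure τ] (hτ : Faithful τ) :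
    ∃ q : C(𝕀, 𝕀), Function.Surjective q ∧ Measure.map q volume = τ := by
  classical
  set F : ℝ → ℝ≥0∞ := fun r => τ {t : 𝕀 | (t : ℝ) ≤ r} with hF
  have hFmono : Monotone F := fun r s hrs => measure_mono (fun t ht => le_trans ht hrs)
  have hFne : ∀ r, F r ≠ ∞ := fun r => measure_ne_top τ _
  have hFle1 : ∀ r, F r ≤ 1 := fun r => prob_le_one
  have hF1 : F 1 = 1 := by
    have : {t : 𝕀 | (t : ℝ) ≤ 1} = univ := eq_univ_of_forall (fun t => t.2.2)
    rw [hF]; simp only [this]; exact measure_univ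
  have hIic : ∀ a : 𝕀, {t : 𝕀 | (t : ℝ) ≤ (a : ℝ)} = Iic a := by
    intro a; ext t; exact Iff.rfl
  -- the sets whose infimum defines the quantile
  set S : ℝ → Set ℝ := fun u => {r : ℝ | r ∈ Icc (0 : ℝ) 1 ∧ ENNReal.ofReal u ≤ F r} with hS
  have hSne : ∀ u : 𝕀, (S u).Nonempty := by
    intro u
    exact ⟨1, ⟨by norm_num, by rw [hF1]; exact ENNReal.ofReal_le_one.2 u.2.2⟩⟩
  have hSbdd : ∀ u : ℝ, BddBelow (S u) := fun u => ⟨0, fun r hr => hr.1.1⟩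
  set qR : ℝ → ℝ := fun u => sInf (S u) with hqR
  have hq01 : ∀ u : 𝕀, qR u ∈ Icc (0 : ℝ) 1 := by
    intro u
    refine ⟨le_csInf (hSne u) (fun r hr => hr.1.1), csInf_le (hSbdd _) ?_⟩
    exact ⟨by norm_num, by rw [hF1]; exact ENNReal.ofReal_le_one.2 u.2.2⟩
  -- right continuity: the infimum still belongs to the set
  have hmem : ∀ u : 𝕀, ENNReal.ofReal u ≤ F (qR u) := by
    intro u
    obtain ⟨seq, hanti, htend, hmemS⟩ := exists_seq_tendsto_sInf (hSne u) (hSbdd (u : ℝ))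
    have hInt : {t : 𝕀 | (t : ℝ) ≤ qR u} = ⋂ n, {t : 𝕀 | (t : ℝ) ≤ seq n} := by
      ext t
      simp only [mem_iInter, mem_setOf_eq]
      constructor
      · intro h n; exact h.trans (csInf_le (hSbdd _) (hmemS n))
      · intro h; exact ge_of_tendsto' htend h
    have hmono : Antitone fun n => {t : 𝕀 | (t : ℝ) ≤ seq n} := by
      intro i j hij t ht
      exact le_trans ht (hanti hij)
    have htm := MeasureTheory.tendsto_measure_iInter_atTop
      (μ := τ) (s := fun n => {t : 𝕀 | (t : ℝ) ≤ seq n})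
      (fun n => ((measurableSet_le (by fun_prop) measurable_const)).nullMeasurableSet)
      hmono ⟨0, measure_ne_top τ _⟩
    have : ENNReal.ofReal u ≤ τ (⋂ n, {t : 𝕀 | (t : ℝ) ≤ seq n}) :=
      ge_of_tendsto' htm (fun n => (hmemS n).2)
    show ENNReal.ofReal (u : ℝ) ≤ τ {t : 𝕀 | (t : ℝ) ≤ qR u}
    rw [hInt]; exact this
  -- Galois connection
  have galois : ∀ (u a : 𝕀), qR u ≤ (a : ℝ) ↔ ENNReal.ofReal u ≤ F a := by
    intro u a
    constructor
    · intro h; exact (hmem u).trans (hFmono h)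
    · intro h; exact csInf_le (hSbdd _) ⟨a.2, h⟩
  set q : 𝕀 → 𝕀 := fun u => ⟨qR u, hq01 u⟩ with hq
  have hqmono : Monotone q := by
    intro u v huv
    rw [hq, Subtype.mk_le_mk]
    exact csInf_le_csInf (hSbdd _) (hSne v)
      (fun r hr => ⟨hr.1, le_trans (ENNReal.ofReal_le_ofReal huv) hr.2⟩)
  -- strict monotonicity of F
  have hstrict : ∀ s t : 𝕀, s < t → F s < F t := by
    intro s t hst
    obtain ⟨c, hc⟩ := exists_between hst
    have hpos : 0 < τ (Ioo s t) := hτ _ isOpen_Ioo ⟨c, hc⟩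
    have hdisj : Disjoint (Iic s) (Ioo s t) := by
      rw [Set.disjoint_left]
      intro y hy hy'
      exact absurd hy'.1 (not_lt.2 hy)
    have hsub : Iic s ∪ Ioo s t ⊆ Iic t := by
      rintro y (hy | hy)
      · exact le_trans hy (le_of_lt hst)
      · exact le_of_lt hy.2
    calc F s = τ (Iic s) := by
          show τ {t' : 𝕀 | (t' : ℝ) ≤ (s : ℝ)} = τ (Iic s)
          rw [hIic]
    _ < τ (Iic s) + τ (Ioo s t) := ENNReal.lt_add_right (measure_ne_top τ _) hpos.ne'
    _ = τ (Iic s ∪ Ioo s t) := (measure_union hdisj measurableSet_Ioo).symm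
    _ ≤ τ (Iic t) := measure_mono hsub
    _ = F t := by
          show τ (Iic t) = τ {t' : 𝕀 | (t' : ℝ) ≤ (t : ℝ)}
          rw [hIic]
  -- surjectivity
  have hsurj : Function.Surjective q := by
    intro t
    have hFt0 : (0 : ℝ) ≤ (F t).toReal := ENNReal.toReal_nonneg
    have hFt1 : (F t).toReal ≤ 1 := by
      rw [← ENNReal.toReal_one]
      exact ENNReal.toReal_mono ENNReal.one_ne_top (hFle1 _)
    refine ⟨⟨(F t).toReal, hFt0, hFt1⟩, ?_⟩
    have hofReal : ENNReal.ofReal ((F t).toReal) = F t := ENNReal.ofReal_toReal (hFne _)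
    have hSet : S ((F t).toReal) = Icc (t : ℝ) 1 := by
      ext r
      simp only [hS, mem_setOf_eq, hofReal, mem_Icc]
      constructor
      · rintro ⟨⟨h0, h1⟩, hFr⟩
        refine ⟨?_, h1⟩
        by_contra hcon
        push_neg at hcon
        have hlt : (⟨r, h0, h1⟩ : 𝕀) < t := Subtype.mk_lt_mk.2 hcon
        exact absurd hFr (not_le.2 (hstrict _ _ hlt))
      · rintro ⟨h1, h2⟩
        exact ⟨⟨t.2.1.trans h1, h2⟩, hFmono h1⟩
    apply Subtype.ext
    show qR ((F t).toReal) = (t : ℝ)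
    rw [hqR]
    show sInf (S ((F t).toReal)) = (t : ℝ)
    rw [hSet]
    exact csInf_Icc t.2.2
  have hqcont : Continuous q := hqmono.continuous_of_surjective hsurj
  have hqmeas : Measurable q := hqcont.measurable
  have hmap : Measure.map q volume = τ := by
    haveI : IsProbabilityMeasure (Measure.map q volume) :=
      Measure.isProbabilityMeasure_map hqmeas.aemeasurable
    refine Measure.ext_of_Iic _ _ (fun a => ?_)
    rw [Measure.map_apply hqmeas measurableSet_Iic]
    have hpre : q ⁻¹' Iic a = {u : 𝕀 | (u : ℝ) ≤ (F a).toReal} := by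
      ext u
      simp only [mem_preimage, mem_Iic, mem_setOf_eq]
      rw [← Subtype.coe_le_coe]
      show qR u ≤ (a : ℝ) ↔ _
      rw [galois u a, ENNReal.ofReal_le_iff_le_toReal (hFne _)]
    have hFa1 : (F a).toReal ≤ 1 := by
      rw [← ENNReal.toReal_one]
      exact ENNReal.toReal_mono ENNReal.one_ne_top (hFle1 _)
    rw [hpre, volume_coe_le _ ENNReal.toReal_nonneg hFa1, ENNReal.ofReal_toReal (hFne _)]
    show τ {t : 𝕀 | (t : ℝ) ≤ (a : ℝ)} = τ (Iic a)
    rw [hIic]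
  exact ⟨⟨q, hqcont⟩, hsurj, hmap⟩

/-! ### Matrix embeddings -/

lemma trace_reindex {p r : Type*} [Fintype p] [Fintype r] [DecidableEq p] [DecidableEq r]
    (e : p ≃ r) (M : Matrix p p ℂ) : (Matrix.reindex e e M).trace = M.trace := by
  rw [Matrix.reindex_apply, Matrix.trace, Matrix.trace]
  exact Fintype.sum_equiv e.symm _ _ (fun i => rfl)

/-- The block-diagonal star algebra homomorphism `Mₙ → M_{n×k}`. -/
def blockEmbed (n k : ℕ) : Mat n →⋆ₐ[ℂ] Matrix (Fin n × Fin k) (Fin n × Fin k) ℂ where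
  toAlgHom := AlgHom.mk'
    ((Matrix.blockDiagonalRingHom (Fin n) (Fin k) ℂ).comp (Pi.constRingHom (Fin k) (Mat n)))
    (fun c a => by
      show Matrix.blockDiagonal (fun _ : Fin k => c • a) = c • Matrix.blockDiagonal _
      rw [show (fun _ : Fin k => c • a) = c • (fun _ : Fin k => a) from rfl]
      exact Matrix.blockDiagonal_smul c _)
  map_star' := fun a => by
    show Matrix.blockDiagonal (fun _ : Fin k => star a) = star (Matrix.blockDiagonal (fun _ : Fin k => a))
    simp only [Matrix.star_eq_conjTranspose, Matrix.blockDiagonal_conjTranspose]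

/-- The standard trace-compatible embedding `Mₙ → Mₘ` for `n ∣ m`. -/
def matEmbed (n m : ℕ) (hd : n ∣ m) : Mat n →⋆ₐ[ℂ] Mat m :=
  letI e : Fin n × Fin (m / n) ≃ Fin m :=
    finProdFinEquiv.trans (finCongr (Nat.mul_div_cancel' hd))
  { toAlgHom := (Matrix.reindexAlgEquiv ℂ ℂ e).toAlgHom.comp (blockEmbed n (m / n)).toAlgHom
    map_star' := fun a => by
      show Matrix.reindexAlgEquiv ℂ ℂ e (blockEmbed n (m / n) (star a))
        = star (Matrix.reindexAlgEquiv ℂ ℂ e (blockEmbed n (m / n) a))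
      rw [map_star (blockEmbed n (m / n)) a]
      simp only [Matrix.reindexAlgEquiv_apply, Matrix.star_eq_conjTranspose,
        Matrix.reindex_apply, Matrix.conjTranspose_submatrix] }

lemma matEmbed_apply (n m : ℕ) (hd : n ∣ m) (a : Mat n) :
    matEmbed n m hd a = Matrix.reindex
      (finProdFinEquiv.trans (finCongr (Nat.mul_div_cancel' hd)))
      (finProdFinEquiv.trans (finCongr (Nat.mul_div_cancel' hd)))
      (Matrix.blockDiagonal fun _ : Fin (m / n) => a) := by
  rfl

lemma matEmbed_injective (n m : ℕ) (hn : 0 < n) (hm : 0 < m) (hd : n ∣ m) :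
    Function.Injective (matEmbed n m hd) := by
  have hk : 0 < m / n := Nat.div_pos (Nat.le_of_dvd hm hd) hn
  haveI : Nonempty (Fin (m / n)) := ⟨⟨0, hk⟩⟩
  intro a b hab
  rw [matEmbed_apply, matEmbed_apply] at hab
  have h2 := (Matrix.reindex _ _).injective hab
  have h3 := Matrix.blockDiagonal_injective h2
  exact congrFun h3 (Classical.arbitrary _)

lemma matEmbed_trace (n m : ℕ) (hd : n ∣ m) (a : Mat n) :
    (matEmbed n m hd a).trace = (m / n : ℕ) * a.trace := by
  rw [matEmbed_apply, trace_reindex, Matrix.trace_blockDiagonal]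
  simp [Finset.sum_const, nsmul_eq_mul]

lemma matEmbed_continuous (n m : ℕ) (hd : n ∣ m) : Continuous (matEmbed n m hd) :=
  LinearMap.continuous_of_finiteDimensional (matEmbed n m hd).toAlgHom.toLinearMap

/-- The combined embedding `𝔸 n → 𝔸 m` built from a quantile map and matrix embedding,
together with its properties. -/
lemma exists_embed (n m : ℕ) (hn : 0 < n) (hm : 0 < m) (hd : n ∣ m)
    (τ : Measure 𝕀) [IsProbabilityMeasure τ] (hτ : Faithful τ) :
    ∃ φ : 𝔸 n →⋆ₐ[ℂ] 𝔸 m, Function.Injective φ ∧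
      ∀ f : 𝔸 n, trInt m volume (φ f) = trInt n τ f := by
  obtain ⟨q, hqsurj, hqmap⟩ := exists_quantile τ hτ
  refine ⟨(ContinuousMap.compStarAlgHom 𝕀 (matEmbed n m hd) (matEmbed_continuous n m hd)).comp
    (ContinuousMap.compStarAlgHom' ℂ (Mat n) q), ?_, ?_⟩
  · intro f g hfg
    refine ContinuousMap.ext (fun t => ?_)
    obtain ⟨u, hu⟩ := hqsurj t
    have h1 : ∀ s : 𝕀, matEmbed n m hd (f (q s)) = matEmbed n m hd (g (q s)) := by
      intro s
      exact DFunLike.congr_fun hfg s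
    have h2 := matEmbed_injective n m hn hm hd (h1 u)
    rw [hu] at h2
    exact h2
  · intro f
    have hcast : (n : ℂ) * ((m / n : ℕ) : ℂ) = (m : ℂ) := by
      exact_mod_cast congrArg (Nat.cast : ℕ → ℂ) (Nat.mul_div_cancel' hd)
    have hn0 : (n : ℂ) ≠ 0 := Nat.cast_ne_zero.2 hn.ne'
    have hm0 : (m : ℂ) ≠ 0 := Nat.cast_ne_zero.2 hm.ne'
    have key : ∀ A : Mat n, (matEmbed n m hd A).trace / (m : ℂ) = A.trace / (n : ℂ) := by
      intro A
      rw [matEmbed_trace, div_eq_div_iff hm0 hn0, ← hcast]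
      ring
    have hint : trInt m volume
        (((ContinuousMap.compStarAlgHom 𝕀 (matEmbed n m hd) (matEmbed_continuous n m hd)).comp
          (ContinuousMap.compStarAlgHom' ℂ (Mat n) q)) f)
        = ∫ t, (f (q t)).trace / (n : ℂ) ∂(volume : Measure 𝕀) := by
      unfold trInt
      congr 1
      funext t
      show (matEmbed n m hd (f (q t))).trace / (m : ℂ) = _
      exact key _
    rw [hint]
    have hqmeas : Measurable q := q.continuous.measurable
    have hcont : Continuous (fun s : 𝕀 => (f s).trace / (n : ℂ)) :=
      (f.continuous.matrix_trace).div_const _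
    calc ∫ t, (f (q t)).trace / (n : ℂ) ∂(volume : Measure 𝕀)
        = ∫ s, (f s).trace / (n : ℂ) ∂(Measure.map q volume) := by
          rw [MeasureTheory.integral_map hqmeas.aemeasurable hcont.aestronglyMeasurable]
      _ = trInt n τ f := by rw [hqmap]; rfl

end Stmt4

/-- Joint embedding: given faithful measures τ₁, τ₂, both ⟨𝔸 n₁, τ₁⟩ and
⟨𝔸 n₂, τ₂⟩ embed into ⟨𝔸 m, σ⟩ for m = lcm(n₁,n₂) and some faithful diffuse measure σ. -/
theorem statement4 (n₁ n₂ : ℕ) (hn₁ : 1 ≤ n₁) (hn₂ : 1 ≤ n₂) (τ₁ τ₂ : Measure 𝕀)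
    [IsProbabilityMeasure τ₁] [IsProbabilityMeasure τ₂] [τ₁.Regular] [τ₂.Regular]
    (hτ₁ : Faithful τ₁) (hτ₂ : Faithful τ₂) :
    ∃ σ : Measure 𝕀, IsProbabilityMeasure σ ∧ σ.Regular ∧ Faithful σ ∧ Diffuse σ ∧
      ∃ (φ₁ : 𝔸 n₁ →⋆ₐ[ℂ] 𝔸 (Nat.lcm n₁ n₂)) (φ₂ : 𝔸 n₂ →⋆ₐ[ℂ] 𝔸 (Nat.lcm n₁ n₂)),
        Function.Injective φ₁ ∧ Function.Injective φ₂ ∧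
        (∀ f : 𝔸 n₁, trInt (Nat.lcm n₁ n₂) σ (φ₁ f) = trInt n₁ τ₁ f) ∧
        (∀ f : 𝔸 n₂, trInt (Nat.lcm n₁ n₂) σ (φ₂ f) = trInt n₂ τ₂ f) := by
  have hm : 0 < Nat.lcm n₁ n₂ := Nat.pos_of_ne_zero (Nat.lcm_ne_zero (by omega) (by omega))
  obtain ⟨φ₁, hinj₁, htr₁⟩ := Stmt4.exists_embed n₁ (Nat.lcm n₁ n₂) hn₁ hm
    (Nat.dvd_lcm_left _ _) τ₁ hτ₁
  obtain ⟨φ₂, hinj₂, htr₂⟩ := Stmt4.exists_embed n₂ (Nat.lcm n₁ n₂) hn₂ hm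
    (Nat.dvd_lcm_right _ _) τ₂ hτ₂
  exact ⟨volume, inferInstance, inferInstance, Stmt4.faithful_volume, Stmt4.diffuse_volume,
    φ₁, φ₂, hinj₁, hinj₂, htr₁, htr₂⟩
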